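/- Let A be a symmetric matrix with nonnegative entries on a finite vertex set V, let C = {C₁,…,C_k} be a partition of V, let b ∈ V with block C(b), let Q = {q ∈ V : q ∉ C(b) and A[b,q] > 0}, and let A' = A'_{−b} be the degree/volume-preserving perturbation of A at b with respect to Q. Then the total increase in intra-block association equals twice the inter-cluster degree of b: Σ_{m=1}^{k} assoc(C_m, C_m | A') − Σ_{m=1}^{k} assoc(C_m, C_m | A) = 2 · d_b^inter, where d_b^inter = Σ_{q∉C(b)} A[b,q]. -/
import Mathlib


open Finset

/-- Degree/volume-preserving perturbation of `A` at `b` with respect to `Q`. -/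
noncomputable def perturb {V : Type*} [Fintype V] [DecidableEq V]
    (A : V → V → ℝ) (b : V) (Q : Finset V) : V → V → ℝ := fun i j =>
  if i = b ∧ j = b then A b b + ∑ q ∈ Q, A b q
  else if i = b ∧ j ∈ Q then 0
  else if j = b ∧ i ∈ Q then 0
  else if i = j ∧ i ∈ Q then A i i + A b i
  else A i j

/-- `assoc(S, T | A) = ∑_{s∈S, t∈T} A[s,t]`. -/
noncomputable def assoc {V : Type*} (A : V → V → ℝ) (S T : Finset V) : ℝ :=
  ∑ s ∈ S, ∑ t ∈ T, A s t

/-- The block of the partition (given by the labelling `cl`) with label `m`. -/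
def block {V ι : Type*} [Fintype V] [DecidableEq ι] (cl : V → ι) (m : ι) : Finset V :=
  univ.filter fun i => cl i = m

/-- Normalized association of the block labelled `m`:
`N_asso(C_m | A) = assoc(C_m, C_m | A) / assoc(C_m, V | A)`. -/
noncomputable def Nasso {V ι : Type*} [Fintype V] [DecidableEq ι]
    (A : V → V → ℝ) (cl : V → ι) (m : ι) : ℝ :=
  assoc A (block cl m) (block cl m) / assoc A (block cl m) univ

/-- Weighted inter-cluster degree of `b`: `d_b^inter = ∑_{q ∉ C(b)} A[b,q]`. -/
noncomputable def dinter {V ι : Type*} [Fintype V] [DecidableEq ι]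
    (A : V → V → ℝ) (cl : V → ι) (b : V) : ℝ :=
  ∑ q ∈ univ.filter (fun q => cl q ≠ cl b), A b q

/-- The set `Q` of inter-cluster neighbors of `b` (perturbation ratio α = 1). -/
noncomputable def interNbrs {V ι : Type*} [Fintype V] [DecidableEq ι]
    (A : V → V → ℝ) (cl : V → ι) (b : V) : Finset V :=
  univ.filter fun q => cl q ≠ cl b ∧ 0 < A b q


lemma sum_assoc_eq' {V : Type*} [Fintype V] [DecidableEq V] {k : ℕ}
    (B : V → V → ℝ) (cl : V → Fin k) :
    (∑ m : Fin k, ∑ i ∈ univ.filter (fun i => cl i = m), ∑ j ∈ univ.filter (fun j => cl j = m), B i j)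
      = ∑ i : V, ∑ j : V, if cl i = cl j then B i j else 0 := by
  simp only [Finset.sum_filter]
  rw [Finset.sum_comm]
  refine Finset.sum_congr rfl fun i _ => ?_
  rw [Finset.sum_ite_eq univ (cl i)]
  simp only [mem_univ, if_true]
  refine Finset.sum_congr rfl fun j _ => ?_
  simp [eq_comm]

theorem stmt3' {V : Type*} [Fintype V] [DecidableEq V] {k : ℕ}
    (A : V → V → ℝ) (hsym : ∀ i j, A i j = A j i) (hnn : ∀ i j, 0 ≤ A i j)
    (cl : V → Fin k) (hpart : Function.Surjective cl) (b : V) :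
    (∑ m : Fin k, ∑ i ∈ univ.filter (fun i => cl i = (m:Fin k)), ∑ j ∈ univ.filter (fun j => cl j = m), (perturb A b (interNbrs A cl b)) i j)
      - (∑ m : Fin k, ∑ i ∈ univ.filter (fun i => cl i = m), ∑ j ∈ univ.filter (fun j => cl j = m), A i j)
      = 2 * dinter A cl b := by
  set Q := interNbrs A cl b with hQ
  have hbQ : b ∉ Q := by simp [hQ, interNbrs]
  have hQmem : ∀ q, q ∈ Q ↔ cl q ≠ cl b ∧ 0 < A b q := by
    intro q; simp [hQ, interNbrs]
  set P := perturb A b Q with hP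
  have hSQ : (∑ q ∈ Q, A b q) = dinter A cl b := by
    rw [dinter, hQ, interNbrs]
    rw [Finset.sum_filter, Finset.sum_filter]
    refine Finset.sum_congr rfl fun q _ => ?_
    by_cases h1 : cl q ≠ cl b
    · by_cases h2 : 0 < A b q
      · simp [h1, h2]
      · have : A b q = 0 := le_antisymm (not_lt.mp h2) (hnn b q)
        simp [h1, h2, this]
    · simp [h1]
  rw [sum_assoc_eq' P cl, sum_assoc_eq' A cl, ← Finset.sum_sub_distrib]
  have key : ∀ i : V,
      ((∑ j : V, if cl i = cl j then P i j else 0) - ∑ j : V, if cl i = cl j then A i j else 0)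
      = (if i = b then (∑ q ∈ Q, A b q) else if i ∈ Q then A b i else 0) := by
    intro i
    rw [← Finset.sum_sub_distrib]
    by_cases hib : i = b
    · subst hib
      rw [Finset.sum_eq_single i]
      · simp [hP, perturb]
      · intro j _ hji
        by_cases hc : cl i = cl j
        · have hjQ : j ∉ Q := fun hj => ((hQmem j).mp hj).1 hc.symm
          have : P i j = A i j := by
            simp [hP, perturb, hji, Ne.symm hji, hjQ]
          simp [hc, this]
        · simp [hc]
      · simp
    · by_cases hiQ : i ∈ Q
      · rw [Finset.sum_eq_single i]
        · have : P i i = A i i + A b i := by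
            simp [hP, perturb, hib, hiQ]
          simp [hib, hiQ, this]
        · intro j _ hji
          by_cases hc : cl i = cl j
          · have hjb : j ≠ b := by
              intro h; subst h
              exact ((hQmem i).mp hiQ).1 hc
            have : P i j = A i j := by
              simp [hP, perturb, hib, hjb, Ne.symm hji]
            simp [hc, this]
          · simp [hc]
        · simp
      · rw [Finset.sum_eq_zero, if_neg hib, if_neg hiQ]
        intro j _
        by_cases hc : cl i = cl j
        · have : P i j = A i j := by
            simp [hP, perturb, hib, hiQ]
          simp [hc, this]
        · simp [hc]
  calc (∑ i : V, ((∑ j : V, if cl i = cl j then P i j else 0)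
          - ∑ j : V, if cl i = cl j then A i j else 0))
      = ∑ i : V, ((if i = b then (∑ q ∈ Q, A b q) else 0)
          + (if i ∈ Q then A b i else 0)) := by
        refine Finset.sum_congr rfl fun i _ => ?_
        rw [key i]
        by_cases hib : i = b
        · subst hib; simp [hbQ]
        · simp [hib]
    _ = (∑ q ∈ Q, A b q) + (∑ q ∈ Q, A b q) := by
        rw [Finset.sum_add_distrib, Finset.sum_ite_eq' univ b, if_pos (mem_univ b)]
        congr 1
        simp [Finset.sum_ite_mem]
    _ = 2 * dinter A cl b := by rw [hSQ]; ring
theorem stmt3 {V : Type*} [Fintype V] [DecidableEq V] {k : ℕ}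
    (A : V → V → ℝ) (hsym : ∀ i j, A i j = A j i) (hnn : ∀ i j, 0 ≤ A i j)
    (cl : V → Fin k) (hpart : Function.Surjective cl) (b : V) :
    (∑ m : Fin k, assoc (perturb A b (interNbrs A cl b)) (block cl m) (block cl m))
      - (∑ m : Fin k, assoc A (block cl m) (block cl m)) = 2 * dinter A cl b := by
  simpa only [assoc, block] using stmt3' A hsym hnn cl hpart b
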